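/- Soundness of NS(V): if a nested sequent Γ ⊢ Δ is derivable in the nested sequent calculus NS(V), then Γ ⊢ Δ is valid, i.e. its formula interpretation ι(Γ ⊢ Δ) holds at every precisification of every standpoint model over V. -/

import Mathlib

/-- Formulas of propositional standpoint logic in negation normal form,
over propositional variables `P` and standpoint symbols `S`. -/
inductive Fml (P S : Type) : Type
  | atom  : P → Fml P S
  | natom : P → Fml P S
  | or    : Fml P S → Fml P S → Fml P S
  | and   : Fml P S → Fml P S → Fml P S
  | box   : S → Fml P S → Fml P S
  | dia   : S → Fml P S → Fml P S

/-- A standpoint model over the vocabulary `(P, S)` with distinguished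
universal standpoint `star`, whose set of precisifications is `W`. -/
structure Model (P S : Type) (star : S) (W : Type) : Type where
  nonempty : Nonempty W
  sig : S → Set W
  val : P → Set W
  sig_nonempty : ∀ s, (sig s).Nonempty
  sig_star : sig star = Set.univ

/-- Satisfaction of a formula at a precisification of a standpoint model. -/
def sat {P S W : Type} {star : S} (M : Model P S star W) : W → Fml P S → Prop
  | w, .atom p  => w ∈ M.val p
  | w, .natom p => w ∉ M.val p
  | w, .or φ ψ  => sat M w φ ∨ sat M w ψ
  | w, .and φ ψ => sat M w φ ∧ sat M w ψ
  | _, .box s φ => ∀ v ∈ M.sig s, sat M v φ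
  | _, .dia s φ => ∃ v ∈ M.sig s, sat M v φ

/-- `M` satisfies every sharpening statement `s ≼ s'` in `Γ`
(this does not depend on the precisification). -/
def satSharp {P S W : Type} {star : S} (M : Model P S star W) (Γ : Set (S × S)) : Prop :=
  ∀ q ∈ Γ, M.sig q.1 ⊆ M.sig q.2

/-- `SpRel star Γ s s'` is `s ≼*_Γ s'`: the least reflexive-transitive relation
containing all pairs of `Γ` and relating every standpoint to `star`. -/
inductive SpRel {S : Type} (star : S) (Γ : Set (S × S)) : S → S → Prop
  | base {s s'} : (s, s') ∈ Γ → SpRel star Γ s s'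
  | toStar (s) : SpRel star Γ s star
  | refl (s) : SpRel star Γ s s
  | trans {s t u} : SpRel star Γ s t → SpRel star Γ t u → SpRel star Γ s u

/-- Satisfaction at `w` of the formula interpretation
`ι(Γ ⊢ Σ₀, (s₁)[Σ₁], …, (sₙ)[Σₙ]) = ⋀Γ → ⋁Σ₀ ∨ ⋁ᵢ ◻_{sᵢ}(⋁Σᵢ)`
of the nested sequent with antecedent `Γ`, root component `root = Σ₀`
and nestings `nest = [(s₁, Σ₁), …, (sₙ, Σₙ)]`. -/
def satSeq {P S W : Type} {star : S} (M : Model P S star W) (w : W)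
    (Γ : Set (S × S)) (root : Multiset (Fml P S))
    (nest : List (S × Multiset (Fml P S))) : Prop :=
  satSharp M Γ →
    (∃ φ ∈ root, sat M w φ) ∨ ∃ e ∈ nest, ∀ v ∈ M.sig e.1, ∃ φ ∈ e.2, sat M v φ

/-- Validity of a nested sequent: its formula interpretation holds at every
precisification of every standpoint model. -/
def ValidSeq {P S : Type} (star : S) (Γ : Set (S × S))
    (root : Multiset (Fml P S)) (nest : List (S × Multiset (Fml P S))) : Prop :=
  ∀ (W : Type) (M : Model P S star W) (w : W), satSeq M w Γ root nest

/-- Derivability in the nested sequent calculus `NS(V)`, for sequents with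
antecedent `Γ`, root component `root` and nestings `nest`.  The constructors
are the rules of `NS(V)` read bottom-up (premises above, conclusion below). -/
inductive Deriv {P S : Type} (star : S) (Γ : Set (S × S)) :
    Multiset (Fml P S) → List (S × Multiset (Fml P S)) → Prop
  /-- `(id)`: some component contains both `p` and `¬p`. -/
  | id {root nest} (p : P) :
      ((Fml.atom p ∈ root ∧ Fml.natom p ∈ root) ∨
        ∃ e ∈ nest, Fml.atom p ∈ e.2 ∧ Fml.natom p ∈ e.2) →
      Deriv star Γ root nest
  /-- `(∨)`, principal formula in the root component. -/
  | orRoot {root nest} {φ ψ : Fml P S} : Fml.or φ ψ ∈ root →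
      Deriv star Γ (φ ::ₘ ψ ::ₘ root) nest → Deriv star Γ root nest
  /-- `(∨)`, principal formula in a nesting. -/
  | orNest {root l₁ l₂ s Θ} {φ ψ : Fml P S} : Fml.or φ ψ ∈ Θ →
      Deriv star Γ root (l₁ ++ (s, φ ::ₘ ψ ::ₘ Θ) :: l₂) →
      Deriv star Γ root (l₁ ++ (s, Θ) :: l₂)
  /-- `(∧)`, principal formula in the root component. -/
  | andRoot {root nest} {φ ψ : Fml P S} : Fml.and φ ψ ∈ root →
      Deriv star Γ (φ ::ₘ root) nest → Deriv star Γ (ψ ::ₘ root) nest →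
      Deriv star Γ root nest
  /-- `(∧)`, principal formula in a nesting. -/
  | andNest {root l₁ l₂ s Θ} {φ ψ : Fml P S} : Fml.and φ ψ ∈ Θ →
      Deriv star Γ root (l₁ ++ (s, φ ::ₘ Θ) :: l₂) →
      Deriv star Γ root (l₁ ++ (s, ψ ::ₘ Θ) :: l₂) →
      Deriv star Γ root (l₁ ++ (s, Θ) :: l₂)
  /-- `(◻ₛ)`: append a fresh nesting `(s)[φ]` for a principal `◻ₛφ`. -/
  | box {root nest s} {φ : Fml P S} :
      (Fml.box s φ ∈ root ∨ ∃ e ∈ nest, Fml.box s φ ∈ e.2) →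
      Deriv star Γ root (nest ++ [(s, ({φ} : Multiset (Fml P S)))]) →
      Deriv star Γ root nest
  /-- `(nₛ)`: append a fresh empty nesting `(s)[∅]`. -/
  | nrule {root nest} (s : S) :
      Deriv star Γ root (nest ++ [(s, (∅ : Multiset (Fml P S)))]) →
      Deriv star Γ root nest
  /-- `(◇ₛ¹)`: `◇ₛφ` principal in a component of `Δ`, `s' ≼*_Γ s`,
  and `φ` is added to the displayed nesting `(s')[Θ]`. -/
  | dia1 {root l₁ l₂ s s' Θ} {φ : Fml P S} : SpRel star Γ s' s →
      (Fml.dia s φ ∈ root ∨ ∃ e ∈ l₁ ++ l₂, Fml.dia s φ ∈ e.2) →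
      Deriv star Γ root (l₁ ++ (s', φ ::ₘ Θ) :: l₂) →
      Deriv star Γ root (l₁ ++ (s', Θ) :: l₂)
  /-- `(◇ₛ²)`: `◇ₛφ` principal inside the nesting `(s')[◇ₛφ, Θ]`, `s' ≼*_Γ s`. -/
  | dia2 {root l₁ l₂ s s' Θ} {φ : Fml P S} : SpRel star Γ s' s →
      Deriv star Γ root (l₁ ++ (s', Fml.dia s φ ::ₘ φ ::ₘ Θ) :: l₂) →
      Deriv star Γ root (l₁ ++ (s', Fml.dia s φ ::ₘ Θ) :: l₂)
  /-- `(◇*)`: `◇*φ` principal in some component, `φ` is added to the root. -/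
  | diaStar {root nest} {φ : Fml P S} :
      (Fml.dia star φ ∈ root ∨ ∃ e ∈ nest, Fml.dia star φ ∈ e.2) →
      Deriv star Γ (φ ::ₘ root) nest → Deriv star Γ root nest

lemma spRel_sub {P S W : Type} {star : S} (M : Model P S star W) {Γ : Set (S × S)}
    (hΓ : satSharp M Γ) {s s' : S} (h : SpRel star Γ s s') : M.sig s ⊆ M.sig s' := by
  induction h with
  | base h => exact hΓ _ h
  | toStar s => simp [M.sig_star]
  | refl s => exact subset_rfl
  | trans _ _ ih1 ih2 => exact ih1.trans ih2

/-- Soundness of `NS(V)`: every derivable nested sequent is valid. -/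
theorem stmt8 {P S : Type} (star : S) (Γ : Set (S × S))
    (root : Multiset (Fml P S)) (nest : List (S × Multiset (Fml P S)))
    (h : Deriv star Γ root nest) :
    ValidSeq star Γ root nest := by
  induction h with
  | id p hp =>
    intro W M w hΓ
    rcases hp with ⟨h1, h2⟩ | ⟨e, he, h1, h2⟩
    · by_cases hw : w ∈ M.val p
      · exact Or.inl ⟨_, h1, hw⟩
      · exact Or.inl ⟨_, h2, hw⟩
    · refine Or.inr ⟨e, he, fun v _ => ?_⟩
      by_cases hv : v ∈ M.val p
      · exact ⟨_, h1, hv⟩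
      · exact ⟨_, h2, hv⟩
  | orRoot hmem _ ih =>
    intro W M w hΓ
    rcases ih W M w hΓ with ⟨χ, hχ, hs⟩ | h
    · rcases Multiset.mem_cons.mp hχ with rfl | hχ
      · exact Or.inl ⟨_, hmem, Or.inl hs⟩
      · rcases Multiset.mem_cons.mp hχ with rfl | hχ
        · exact Or.inl ⟨_, hmem, Or.inr hs⟩
        · exact Or.inl ⟨_, hχ, hs⟩
    · exact Or.inr h
  | orNest hmem _ ih =>
    intro W M w hΓ
    rcases ih W M w hΓ with h | ⟨e, he, hall⟩
    · exact Or.inl h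
    · rcases List.mem_append.mp he with he | he
      · exact Or.inr ⟨e, List.mem_append.mpr (Or.inl he), hall⟩
      · rcases List.mem_cons.mp he with rfl | he
        · refine Or.inr ⟨_, List.mem_append.mpr (Or.inr List.mem_cons_self),
            fun v hv => ?_⟩
          rcases hall v hv with ⟨χ, hχ, hs⟩
          rcases Multiset.mem_cons.mp hχ with rfl | hχ
          · exact ⟨_, hmem, Or.inl hs⟩
          · rcases Multiset.mem_cons.mp hχ with rfl | hχ
            · exact ⟨_, hmem, Or.inr hs⟩
            · exact ⟨_, hχ, hs⟩
        · exact Or.inr ⟨e, List.mem_append.mpr (Or.inr (List.mem_cons_of_mem _ he)), hall⟩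
  | andRoot hmem _ _ ih1 ih2 =>
    intro W M w hΓ
    rcases ih1 W M w hΓ with ⟨χ, hχ, hs⟩ | h
    · rcases Multiset.mem_cons.mp hχ with rfl | hχ
      · rcases ih2 W M w hΓ with ⟨χ', hχ', hs'⟩ | h
        · rcases Multiset.mem_cons.mp hχ' with rfl | hχ'
          · exact Or.inl ⟨_, hmem, hs, hs'⟩
          · exact Or.inl ⟨_, hχ', hs'⟩
        · exact Or.inr h
      · exact Or.inl ⟨_, hχ, hs⟩
    · exact Or.inr h
  | andNest hmem _ _ ih1 ih2 =>
    intro W M w hΓ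
    rcases ih1 W M w hΓ with h | ⟨e, he, hall⟩
    · exact Or.inl h
    · rcases List.mem_append.mp he with he | he
      · exact Or.inr ⟨e, List.mem_append.mpr (Or.inl he), hall⟩
      · rcases List.mem_cons.mp he with rfl | he
        · rcases ih2 W M w hΓ with h | ⟨e2, he2, hall2⟩
          · exact Or.inl h
          · rcases List.mem_append.mp he2 with he2 | he2
            · exact Or.inr ⟨e2, List.mem_append.mpr (Or.inl he2), hall2⟩
            · rcases List.mem_cons.mp he2 with rfl | he2
              · refine Or.inr ⟨_, List.mem_append.mpr (Or.inr List.mem_cons_self),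
                  fun v hv => ?_⟩
                rcases hall v hv with ⟨χ, hχ, hs⟩
                rcases Multiset.mem_cons.mp hχ with rfl | hχ
                · rcases hall2 v hv with ⟨χ', hχ', hs'⟩
                  rcases Multiset.mem_cons.mp hχ' with rfl | hχ'
                  · exact ⟨_, hmem, hs, hs'⟩
                  · exact ⟨_, hχ', hs'⟩
                · exact ⟨_, hχ, hs⟩
              · exact Or.inr ⟨e2, List.mem_append.mpr (Or.inr (List.mem_cons_of_mem _ he2)),
                  hall2⟩
        · exact Or.inr ⟨e, List.mem_append.mpr (Or.inr (List.mem_cons_of_mem _ he)), hall⟩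
  | box hmem _ ih =>
    rename_i root nest s φ hprem
    intro W M w hΓ
    rcases ih W M w hΓ with h | ⟨e, he, hall⟩
    · exact Or.inl h
    · rcases List.mem_append.mp he with he | he
      · exact Or.inr ⟨e, he, hall⟩
      · have he' : e = (s, ({φ} : Multiset (Fml P S))) := by simpa using he
        subst he'
        have hbox : ∀ (u : W), sat M u (Fml.box s φ) := by
          intro u v hv
          rcases hall v hv with ⟨χ, hχ, hs⟩
          rw [Multiset.mem_singleton] at hχ
          subst hχ
          exact hs
        rcases hmem with h1 | ⟨e', he', h2⟩
        · exact Or.inl ⟨_, h1, hbox w⟩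
        · exact Or.inr ⟨e', he', fun v hv => ⟨_, h2, hbox v⟩⟩
  | nrule s _ ih =>
    intro W M w hΓ
    rcases ih W M w hΓ with h | ⟨e, he, hall⟩
    · exact Or.inl h
    · rcases List.mem_append.mp he with he | he
      · exact Or.inr ⟨e, he, hall⟩
      · exfalso
        have he' : e = (s, (∅ : Multiset _)) := by simpa using he
        subst he'
        obtain ⟨v, hv⟩ := M.sig_nonempty s
        rcases hall v hv with ⟨χ, hχ, -⟩
        simp at hχ
  | dia1 hrel hmem _ ih =>
    rename_i root l₁ l₂ s s' Θ φ hprem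
    intro W M w hΓ
    have hsub := spRel_sub M hΓ hrel
    rcases ih W M w hΓ with h | ⟨e, he, hall⟩
    · exact Or.inl h
    · rcases List.mem_append.mp he with he | he
      · exact Or.inr ⟨e, List.mem_append.mpr (Or.inl he), hall⟩
      · rcases List.mem_cons.mp he with rfl | he
        · by_cases hall' : ∀ v ∈ M.sig s', ∃ χ ∈ Θ, sat M v χ
          · exact Or.inr ⟨_, List.mem_append.mpr (Or.inr List.mem_cons_self), hall'⟩
          · push_neg at hall'
            obtain ⟨v, hv, hvn⟩ := hall'
            rcases hall v hv with ⟨χ, hχ, hs⟩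
            rcases Multiset.mem_cons.mp hχ with rfl | hχ
            · have hdia : ∀ (u : W), sat M u (Fml.dia s χ) := fun _ => ⟨v, hsub hv, hs⟩
              rcases hmem with h1 | ⟨e', he', h2⟩
              · exact Or.inl ⟨_, h1, hdia w⟩
              · rcases List.mem_append.mp he' with he' | he'
                · exact Or.inr ⟨e', List.mem_append.mpr (Or.inl he'),
                    fun u _ => ⟨_, h2, hdia u⟩⟩
                · exact Or.inr ⟨e', List.mem_append.mpr (Or.inr (List.mem_cons_of_mem _ he')),
                    fun u _ => ⟨_, h2, hdia u⟩⟩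
            · exact absurd hs (hvn χ hχ)
        · exact Or.inr ⟨e, List.mem_append.mpr (Or.inr (List.mem_cons_of_mem _ he)), hall⟩
  | dia2 hrel _ ih =>
    intro W M w hΓ
    have hsub := spRel_sub M hΓ hrel
    rcases ih W M w hΓ with h | ⟨e, he, hall⟩
    · exact Or.inl h
    · rcases List.mem_append.mp he with he | he
      · exact Or.inr ⟨e, List.mem_append.mpr (Or.inl he), hall⟩
      · rcases List.mem_cons.mp he with rfl | he
        · refine Or.inr ⟨_, List.mem_append.mpr (Or.inr List.mem_cons_self),
            fun v hv => ?_⟩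
          rcases hall v hv with ⟨χ, hχ, hs⟩
          rcases Multiset.mem_cons.mp hχ with rfl | hχ
          · exact ⟨_, Multiset.mem_cons_self _ _, hs⟩
          · rcases Multiset.mem_cons.mp hχ with rfl | hχ
            · exact ⟨_, Multiset.mem_cons_self _ _, ⟨v, hsub hv, hs⟩⟩
            · exact ⟨_, Multiset.mem_cons_of_mem hχ, hs⟩
        · exact Or.inr ⟨e, List.mem_append.mpr (Or.inr (List.mem_cons_of_mem _ he)), hall⟩
  | diaStar hmem _ ih =>
    rename_i root nest φ hprem
    intro W M w hΓ
    rcases ih W M w hΓ with ⟨χ, hχ, hs⟩ | h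
    · rcases Multiset.mem_cons.mp hχ with rfl | hχ
      · have hdia : ∀ (u : W), sat M u (Fml.dia star χ) :=
          fun _ => ⟨w, by simp [M.sig_star], hs⟩
        rcases hmem with h1 | ⟨e', he', h2⟩
        · exact Or.inl ⟨_, h1, hdia w⟩
        · exact Or.inr ⟨e', he', fun v _ => ⟨_, h2, hdia v⟩⟩
      · exact Or.inl ⟨_, hχ, hs⟩
    · exact Or.inr h
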